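/- arXiv:2411.08258 — 4 statements merged into one kernel-verified Lean document; each statement's English description precedes it below -/
import Mathlib

section
/- The map Φ : V_n → S_n is a bijection. (In particular, every permutation π ∈ S_n can be written uniquely as π = κ_{n−2,a_1} ∘ κ_{n−3,a_2} ∘ ⋯ ∘ κ_{1,a_{n−2}} ∘ κ_{0,a_{n−1}} with 1 ≤ a_j ≤ j+1 for each j.) -/
/-- Underlying function of the suffix block transposition `κ_{i,s}`:
`j ↦ j` for `j < i`, and `j ↦ i + ((j - i + s) mod (n - i))` for `i ≤ j ≤ n-1`. -/
def kappaFun (n i s : ℕ) (j : Fin n) : Fin n :=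
  if h : (j : ℕ) < i then j
  else ⟨i + (((j : ℕ) - i + s) % (n - i)), by
    have hj := j.isLt
    have hpos : 0 < n - i := by omega
    have hm := Nat.mod_lt ((j : ℕ) - i + s) hpos
    omega⟩

theorem kappaFun_injective (n i s : ℕ) : Function.Injective (kappaFun n i s) := by
  intro a b hab
  unfold kappaFun at hab
  by_cases ha : (a : ℕ) < i <;> by_cases hb : (b : ℕ) < i
  · rw [dif_pos ha, dif_pos hb] at hab
    exact hab
  · rw [dif_pos ha, dif_neg hb] at hab
    have h := congrArg Fin.val hab
    simp only at h
    omega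
  · rw [dif_neg ha, dif_pos hb] at hab
    have h := congrArg Fin.val hab
    simp only at h
    omega
  · rw [dif_neg ha, dif_neg hb] at hab
    have h := congrArg Fin.val hab
    simp only at h
    have h1 : ((a : ℕ) - i + s) % (n - i) = ((b : ℕ) - i + s) % (n - i) := by omega
    have h2 : ((a : ℕ) - i) % (n - i) = ((b : ℕ) - i) % (n - i) :=
      Nat.ModEq.add_right_cancel' s h1
    have ha' : (a : ℕ) - i < n - i := by have := a.isLt; omega
    have hb' : (b : ℕ) - i < n - i := by have := b.isLt; omega
    rw [Nat.mod_eq_of_lt ha', Nat.mod_eq_of_lt hb'] at h2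
    exact Fin.ext (by omega)

/-- The suffix block transposition `κ_{i,s}` as a permutation of `Fin n`. -/
noncomputable def kappa (n i s : ℕ) : Equiv.Perm (Fin n) :=
  Equiv.ofBijective _ (Finite.injective_iff_bijective.mp (kappaFun_injective n i s))

/-- `V_n`: vectors `[a_0,…,a_{n-1}]` with `1 ≤ a_j ≤ j+1` for each `j`. -/
def Vn (n : ℕ) : Set (Fin n → ℕ) :=
  {a | ∀ j : Fin n, 1 ≤ a j ∧ a j ≤ (j : ℕ) + 1}

/-- `Φ([a_0,…,a_{n-1}]) = κ_{n-2,a_1} ∘ κ_{n-3,a_2} ∘ ⋯ ∘ κ_{1,a_{n-2}} ∘ κ_{0,a_{n-1}}`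
(the factor for `j = 0` is `κ_{n-1,a_0}`, which is the identity permutation). -/
noncomputable def Phi (n : ℕ) (a : Fin n → ℕ) : Equiv.Perm (Fin n) :=
  ((List.finRange n).map (fun (j : Fin n) => kappa n (n - 1 - (j : ℕ)) (a j))).prod

/-- `W_{T,n}`: vectors in `V_n` whose parity (sum of components) is `≡ T (mod n)`. -/
def Wset (n : ℕ) (T : ℤ) : Set (Fin n → ℕ) :=
  {a | a ∈ Vn n ∧ Int.ModEq (n : ℤ) ((∑ j, a j : ℕ) : ℤ) T}

/-- `C_{T,n} = {(Φ(α))⁻¹ : α ∈ W_{T,n}}`. -/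
def Cset (n : ℕ) (T : ℤ) : Set (Equiv.Perm (Fin n)) :=
  {π | ∃ a ∈ Wset n T, π = (Phi n a)⁻¹}

/-- `cinv n π j = π⁻¹(j)` as a natural number (junk value `0` out of range). -/
def cinv (n : ℕ) (π : Equiv.Perm (Fin n)) (j : ℕ) : ℕ :=
  if h : j < n then (π.symm ⟨j, h⟩ : ℕ) else 0

/-- The `i`-th component of a vector indexed by `Fin n` (junk value `0` out of range). -/
def Rcomp (n : ℕ) (v : Fin n → ℕ) (i : ℕ) : ℕ :=
  if h : i < n then v ⟨i, h⟩ else 0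


lemma kappa_apply (n i s : ℕ) (x : Fin n) : kappa n i s x = kappaFun n i s x := rfl

lemma kappa_fix (n i s : ℕ) (x : Fin n) (hx : (x : ℕ) < i) : kappa n i s x = x := by
  rw [kappa_apply, kappaFun, dif_pos hx]

/-- Partial products of the factors of `Phi`. -/
noncomputable def Pk (n : ℕ) (a : Fin n → ℕ) (k : ℕ) : Equiv.Perm (Fin n) :=
  (((List.finRange n).take k).map (fun (j : Fin n) => kappa n (n - 1 - (j : ℕ)) (a j))).prod

lemma Pk_top (n : ℕ) (a : Fin n → ℕ) : Pk n a n = Phi n a := by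
  unfold Pk Phi
  rw [List.take_of_length_le (by simp)]

lemma Pk_succ (n : ℕ) (a : Fin n → ℕ) (k : ℕ) (hk : k < n) :
    Pk n a (k + 1) = Pk n a k * kappa n (n - 1 - k) (a ⟨k, hk⟩) := by
  unfold Pk
  rw [List.take_succ]
  have h1 : (List.finRange n)[k]? = some ⟨k, hk⟩ := by
    rw [List.getElem?_eq_getElem (by simpa using hk)]
    simp
  rw [h1]
  simp

lemma Pk_fix (n : ℕ) (a : Fin n → ℕ) : ∀ k : ℕ, ∀ x : Fin n, (x : ℕ) + k < n →
    Pk n a k x = x := by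
  intro k
  induction k with
  | zero => intro x _; simp [Pk]
  | succ k ih =>
    intro x hx
    have hk : k < n := by omega
    rw [Pk_succ n a k hk, Equiv.Perm.mul_apply, kappa_fix n _ _ x (by omega)]
    exact ih x (by omega)

lemma kappa_unique (n i : ℕ) (hi : i < n) (s s' : ℕ)
    (hs1 : 1 ≤ s) (hs2 : s ≤ n - i) (hs1' : 1 ≤ s') (hs2' : s' ≤ n - i)
    (x : Fin n) (h : kappa n i s x = ⟨i, hi⟩) (h' : kappa n i s' x = ⟨i, hi⟩) : s = s' := by
  have hxi : ¬ ((x : ℕ) < i) := by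
    intro hlt
    rw [kappa_fix n i s x hlt] at h
    have := congrArg Fin.val h
    simp at this
    omega
  rw [kappa_apply, kappaFun, dif_neg hxi] at h h'
  have h1 : ((x : ℕ) - i + s) % (n - i) = 0 := by
    have := congrArg Fin.val h
    simp only at this
    omega
  have h1' : ((x : ℕ) - i + s') % (n - i) = 0 := by
    have := congrArg Fin.val h'
    simp only at this
    omega
  have d1 : (n - i) ∣ ((x : ℕ) - i + s) := Nat.dvd_of_mod_eq_zero h1
  have d1' : (n - i) ∣ ((x : ℕ) - i + s') := Nat.dvd_of_mod_eq_zero h1'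
  rcases le_total s s' with hle | hle
  · have hd : (n - i) ∣ (((x : ℕ) - i + s') - ((x : ℕ) - i + s)) := Nat.dvd_sub d1' d1
    have : ((x : ℕ) - i + s') - ((x : ℕ) - i + s) = s' - s := by omega
    rw [this] at hd
    have := Nat.eq_zero_of_dvd_of_lt hd (by omega)
    omega
  · have hd : (n - i) ∣ (((x : ℕ) - i + s) - ((x : ℕ) - i + s')) := Nat.dvd_sub d1 d1'
    have : ((x : ℕ) - i + s) - ((x : ℕ) - i + s') = s - s' := by omega
    rw [this] at hd
    have := Nat.eq_zero_of_dvd_of_lt hd (by omega)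
    omega

lemma phi_injOn (n : ℕ) : Set.InjOn (Phi n) (Vn n) := by
  intro a ha b hb hab
  have key : ∀ m : ℕ, m ≤ n →
      Pk n a (n - m) = Pk n b (n - m) ∧ ∀ j : Fin n, n - m ≤ (j : ℕ) → a j = b j := by
    intro m
    induction m with
    | zero =>
      intro _
      refine ⟨by simpa [Pk_top] using hab, fun j hj => absurd j.isLt (by omega)⟩
    | succ m ih =>
      intro hm
      obtain ⟨hP, hjs⟩ := ih (by omega)
      set k : ℕ := n - m - 1 with hkdef
      have hk : k < n := by omega
      have hk1 : k + 1 = n - m := by omega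
      have hP' : Pk n a k * kappa n (n - 1 - k) (a ⟨k, hk⟩)
          = Pk n b k * kappa n (n - 1 - k) (b ⟨k, hk⟩) := by
        rw [← Pk_succ n a k hk, ← Pk_succ n b k hk, hk1]
        exact hP
      set t : ℕ := n - 1 - k with htdef
      have htn : t < n := by omega
      set T : Fin n := ⟨t, htn⟩ with hT
      set x : Fin n := (Pk n a k * kappa n t (a ⟨k, hk⟩))⁻¹ T with hx
      have hxa : (Pk n a k * kappa n t (a ⟨k, hk⟩)) x = T := by
        rw [hx]; exact Equiv.apply_symm_apply _ _
      have hxb : (Pk n b k * kappa n t (b ⟨k, hk⟩)) x = T := by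
        rw [← hP']; exact hxa
      have hfixa : Pk n a k T = T := Pk_fix n a k T (by simp [hT]; omega)
      have hfixb : Pk n b k T = T := Pk_fix n b k T (by simp [hT]; omega)
      have hka : kappa n t (a ⟨k, hk⟩) x = T := by
        apply (Pk n a k).injective
        rw [hfixa, ← Equiv.Perm.mul_apply]
        exact hxa
      have hkb : kappa n t (b ⟨k, hk⟩) x = T := by
        apply (Pk n b k).injective
        rw [hfixb, ← Equiv.Perm.mul_apply]
        exact hxb
      have hboundsa := ha ⟨k, hk⟩
      have hboundsb := hb ⟨k, hk⟩
      have habk : a ⟨k, hk⟩ = b ⟨k, hk⟩ := by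
        refine kappa_unique n t htn _ _ hboundsa.1 (by simp at hboundsa ⊢; omega)
          hboundsb.1 (by simp at hboundsb ⊢; omega) x hka hkb
      constructor
      · have heq : Pk n a k * kappa n t (a ⟨k, hk⟩) = Pk n b k * kappa n t (a ⟨k, hk⟩) := by
          rw [hP', habk]
        have : Pk n a k = Pk n b k := mul_right_cancel heq
        have hnm : n - (m + 1) = k := by omega
        rw [hnm]
        exact this
      · intro j hj
        rcases Nat.lt_or_ge (j : ℕ) (n - m) with hlt | hge
        · have hjk : (j : ℕ) = k := by omega
          have : j = ⟨k, hk⟩ := Fin.ext hjk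
          rw [this]
          exact habk
        · exact hjs j hge
  have := (key n le_rfl).2
  funext j
  exact this j (by omega)

lemma Vn_ncard (n : ℕ) : (Vn n).ncard = n.factorial := by
  have hVn : Vn n = ↑(Fintype.piFinset fun j : Fin n => Finset.Icc 1 ((j : ℕ) + 1)) := by
    ext a
    simp only [Vn, Set.mem_setOf_eq, Finset.mem_coe, Fintype.mem_piFinset, Finset.mem_Icc]
  rw [hVn, Set.ncard_coe_finset, Fintype.card_piFinset]
  simp only [Nat.card_Icc]
  have : ∀ j : Fin n, (j : ℕ) + 1 + 1 - 1 = (j : ℕ) + 1 := fun j => by omega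
  calc ∏ j : Fin n, ((j : ℕ) + 1 + 1 - 1) = ∏ j : Fin n, ((j : ℕ) + 1) := by
        exact Finset.prod_congr rfl (fun j _ => this j)
    _ = ∏ i ∈ Finset.range n, (i + 1) := Fin.prod_univ_eq_prod_range _ _
    _ = n.factorial := Finset.prod_range_add_one_eq_factorial n

theorem stmt_0 (n : ℕ) (hn : 2 ≤ n) :
    Set.BijOn (Phi n) (Vn n) Set.univ := by
  have hinj := phi_injOn n
  refine ⟨fun _ _ => Set.mem_univ _, hinj, ?_⟩
  have h1 : (Phi n '' Vn n).ncard = n.factorial := by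
    rw [Set.ncard_image_of_injOn hinj, Vn_ncard]
  have h2 : (Set.univ : Set (Equiv.Perm (Fin n))).ncard = n.factorial := by
    rw [Set.ncard_univ, Nat.card_eq_fintype_card, Fintype.card_perm, Fintype.card_fin]
  have heq : Phi n '' Vn n = Set.univ :=
    Set.eq_of_subset_of_ncard_le (Set.subset_univ _) (by rw [h1, h2]) Set.finite_univ
  exact heq.symm.subset
end

section
/- Let π ∈ S_n, let c_j = π^{−1}(j) for j = 0,…,n−1, and write R(π) = [a_0,…,a_{n−1}]. Then for every i with 0 ≤ i ≤ n−2, a_i equals the number of indices k ∈ {0,1,…,i} such that ((c_{n−1−k} − c_{n−1−i}) mod n) ≤ ((c_{n−2−i} − c_{n−1−i}) mod n); moreover a_{n−1} = n − c_0. -/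
lemma kappa_apply_lt {n i : ℕ} (s : ℕ) {x : Fin n} (h : (x:ℕ) < i) : kappa n i s x = x := by
  rw [kappa_apply, kappaFun, dif_pos h]

lemma kappa_apply_ge {n i : ℕ} (s : ℕ) {x : Fin n} (h : i ≤ (x:ℕ)) :
    ((kappa n i s x : Fin n) : ℕ) = i + (((x:ℕ) - i + s) % (n - i)) := by
  rw [kappa_apply, kappaFun, dif_neg (by omega)]

lemma kappa_apply_ge' {n i : ℕ} (s : ℕ) {x : Fin n} (h : i ≤ (x:ℕ)) :
    i ≤ ((kappa n i s x : Fin n) : ℕ) := by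
  rw [kappa_apply_ge s h]; omega

lemma kappa_symm_lt {n i : ℕ} (s : ℕ) {x : Fin n} (h : (x:ℕ) < i) :
    (kappa n i s).symm x = x := by
  rw [Equiv.symm_apply_eq, kappa_apply_lt s h]

lemma kappa_symm_ge {n i : ℕ} (s : ℕ) {x : Fin n} (h : i ≤ (x:ℕ)) :
    i ≤ (((kappa n i s).symm x : Fin n) : ℕ) := by
  by_contra hc
  push_neg at hc
  have hfix := kappa_apply_lt (n := n) s hc
  rw [Equiv.apply_symm_apply] at hfix
  have h2 := congrArg Fin.val hfix
  omega

/-! ### Partial products of `Phi` -/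

/-- `rho n a m` is the product of the last `m` factors in `Phi n a`:
`κ_{m-1,·} ∘ κ_{m-2,·} ∘ ⋯ ∘ κ_{0,·}`. -/
noncomputable def rho (n : ℕ) (a : Fin n → ℕ) : ℕ → Equiv.Perm (Fin n)
  | 0 => 1
  | (m+1) => (if h : m < n then kappa n m (a ⟨n-1-m, by omega⟩) else 1) * rho n a m

lemma drop_prod_eq (n : ℕ) (a : Fin n → ℕ) :
    ∀ j ≤ n, (((List.finRange n).map
        (fun (j : Fin n) => kappa n (n - 1 - (j : ℕ)) (a j))).drop (n - j)).prod
      = rho n a j := by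
  intro j
  induction j with
  | zero =>
    intro _
    rw [Nat.sub_zero, List.drop_eq_nil_of_le (by simp), List.prod_nil]
    rfl
  | succ j ih =>
    intro hj
    have hlen : n - (j+1) <
        ((List.finRange n).map (fun (j : Fin n) => kappa n (n - 1 - (j : ℕ)) (a j))).length := by
      simp; omega
    rw [List.drop_eq_getElem_cons hlen, List.prod_cons]
    have h2 : n - (j+1) + 1 = n - j := by omega
    rw [h2, ih (by omega)]
    simp only [List.getElem_map, List.getElem_finRange, Fin.cast_mk]
    rw [rho, dif_pos (by omega : j < n)]
    have h3 : n - 1 - (n - (j+1)) = j := by omega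
    have h4 : n - (j+1) = n - 1 - j := by omega
    simp only [h3, h4]
    have h5 : n - 1 - (n - 1 - j) = j := by omega
    simp only [h5]

lemma phi_eq_rho (n : ℕ) (a : Fin n → ℕ) : Phi n a = rho n a n := by
  have h := drop_prod_eq n a n le_rfl
  rw [Nat.sub_self] at h
  rw [← h]
  rfl

/-- `tau n a m` is the product of the remaining (first `n - m`) factors of `Phi n a`. -/
noncomputable def tau (n : ℕ) (a : Fin n → ℕ) (m : ℕ) : Equiv.Perm (Fin n) :=
  Phi n a * (rho n a m)⁻¹

lemma tau_mul_rho (n : ℕ) (a : Fin n → ℕ) (m : ℕ) : tau n a m * rho n a m = Phi n a := by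
  rw [tau, inv_mul_cancel_right]

lemma tau_step (n : ℕ) (a : Fin n → ℕ) {m : ℕ} (hm : m < n) :
    tau n a m = tau n a (m+1) * kappa n m (a ⟨n-1-m, by omega⟩) := by
  rw [tau, tau, rho, dif_pos hm, mul_inv_rev]
  group

lemma tau_fix_aux (n : ℕ) (a : Fin n → ℕ) :
    ∀ k m, m + k = n → ∀ x : Fin n, (x : ℕ) < m → tau n a m x = x := by
  intro k
  induction k with
  | zero =>
    intro m hm x _
    have hmn : m = n := by omega
    subst hmn
    rw [tau, phi_eq_rho, mul_inv_cancel]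
    rfl
  | succ k ih =>
    intro m hm x hx
    rw [tau_step n a (by omega : m < n), Equiv.Perm.mul_apply, kappa_apply_lt _ hx]
    exact ih (m+1) (by omega) x (by omega)

lemma tau_fix {n : ℕ} (a : Fin n → ℕ) {m : ℕ} (hm : m ≤ n) {x : Fin n} (hx : (x:ℕ) < m) :
    tau n a m x = x :=
  tau_fix_aux n a (n - m) m (by omega) x hx

lemma tau_symm_fix {n : ℕ} (a : Fin n → ℕ) {m : ℕ} (hm : m ≤ n) {x : Fin n} (hx : (x:ℕ) < m) :
    (tau n a m).symm x = x := by
  rw [Equiv.symm_apply_eq, tau_fix a hm hx]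

lemma tau_ge {n : ℕ} (a : Fin n → ℕ) {m : ℕ} (hm : m ≤ n) {x : Fin n} (hx : m ≤ (x:ℕ)) :
    m ≤ ((tau n a m x : Fin n) : ℕ) := by
  by_contra hc
  push_neg at hc
  have hfix := tau_fix a hm hc
  have h2 := congrArg Fin.val ((tau n a m).injective hfix)
  omega

lemma tau_symm_ge {n : ℕ} (a : Fin n → ℕ) {m : ℕ} (hm : m ≤ n) {x : Fin n} (hx : m ≤ (x:ℕ)) :
    m ≤ (((tau n a m).symm x : Fin n) : ℕ) := by
  by_contra hc
  push_neg at hc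
  have hfix := tau_fix a hm hc
  rw [Equiv.apply_symm_apply] at hfix
  have h2 := congrArg Fin.val hfix
  omega

/-! ### Cyclic order machinery -/

/-- Cyclic distance from `x` to `y` on `Fin n`, in `ℤ`. -/
def Dd (n : ℕ) (x y : Fin n) : ℤ := (((y:ℕ):ℤ) - ((x:ℕ):ℤ)) % (n:ℤ)

/-- Cyclic distance from `t` to `t'` within the block `[m, n)`. -/
def Bb (n m : ℕ) (t t' : Fin n) : ℤ := (((t':ℕ):ℤ) - ((t:ℕ):ℤ)) % ((n:ℤ) - (m:ℤ))

/-- `g` preserves the cyclic order of the block `[m, n)`. -/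
def InvOrd (n m : ℕ) (g : Fin n → Fin n) : Prop :=
  ∀ t t' t'' : Fin n, m ≤ (t:ℕ) → m ≤ (t':ℕ) → m ≤ (t'':ℕ) →
    (Bb n m t t' ≤ Bb n m t t'' ↔ Dd n (g t) (g t') ≤ Dd n (g t) (g t''))

lemma emod_sub_eval {K x y : ℤ} (hK : 0 < K) (hx0 : 0 ≤ x) (hx : x < K) (hy0 : 0 ≤ y)
    (hy : y < K) : (y - x) % K = if x ≤ y then y - x else y - x + K := by
  split_ifs with h
  · exact Int.emod_eq_of_lt (by omega) (by omega)
  · rw [← Int.add_emod_right]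
    exact Int.emod_eq_of_lt (by omega) (by omega)

lemma Bb_eval {n m : ℕ} {t t' : Fin n} (ht : m ≤ (t:ℕ)) (ht' : m ≤ (t':ℕ)) :
    Bb n m t t' = if (t:ℕ) ≤ (t':ℕ) then ((t':ℕ):ℤ) - ((t:ℕ):ℤ)
      else ((t':ℕ):ℤ) - ((t:ℕ):ℤ) + ((n:ℤ) - (m:ℤ)) := by
  have h1 := t.isLt
  have h2 := t'.isLt
  have hK : (0:ℤ) < (n:ℤ) - (m:ℤ) := by omega
  rw [Bb, show (((t':ℕ):ℤ) - ((t:ℕ):ℤ)) = ((((t':ℕ):ℤ) - (m:ℤ)) - (((t:ℕ):ℤ) - (m:ℤ))) by ring,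
    emod_sub_eval hK (by omega) (by omega) (by omega) (by omega)]
  split_ifs <;> omega

lemma Bb_zero (n : ℕ) (x y : Fin n) : Bb n 0 x y = Dd n x y := by
  simp [Bb, Dd]

lemma Dd_eval {n : ℕ} (x y : Fin n) :
    Dd n x y = if (x:ℕ) ≤ (y:ℕ) then ((y:ℕ):ℤ) - ((x:ℕ):ℤ)
      else ((y:ℕ):ℤ) - ((x:ℕ):ℤ) + (n:ℤ) := by
  rw [← Bb_zero]
  have h := Bb_eval (m := 0) (Nat.zero_le x) (Nat.zero_le y)
  rw [h]
  norm_num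

lemma invOrd_one (n : ℕ) : InvOrd n 0 (⇑((1 : Equiv.Perm (Fin n))⁻¹)) := by
  intro t t' t'' _ _ _
  simp [Bb_zero]

lemma Bb_kappa {n m s : ℕ} {t t' : Fin n} (ht : m ≤ (t:ℕ)) (ht' : m ≤ (t':ℕ)) :
    Bb n m (kappa n m s t) (kappa n m s t') = Bb n m t t' := by
  have hmn : m ≤ n := le_of_lt (lt_of_le_of_lt ht t.isLt)
  have key : ∀ x : Fin n, m ≤ (x:ℕ) →
      (((kappa n m s x : Fin n) : ℕ) : ℤ)
        = (m:ℤ) + ((((x:ℕ):ℤ) - (m:ℤ) + (s:ℤ)) % ((n:ℤ) - (m:ℤ))) := by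
    intro x hx
    have h := congrArg (Nat.cast (R := ℤ)) (kappa_apply_ge s hx)
    push_cast [Nat.cast_sub hx, Nat.cast_sub hmn] at h
    rw [h]
  rw [Bb, Bb, key t ht, key t' ht',
    show ((m:ℤ) + ((((t':ℕ):ℤ) - (m:ℤ) + (s:ℤ)) % ((n:ℤ) - (m:ℤ))))
        - ((m:ℤ) + ((((t:ℕ):ℤ) - (m:ℤ) + (s:ℤ)) % ((n:ℤ) - (m:ℤ))))
      = ((((t':ℕ):ℤ) - (m:ℤ) + (s:ℤ)) % ((n:ℤ) - (m:ℤ)))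
        - ((((t:ℕ):ℤ) - (m:ℤ) + (s:ℤ)) % ((n:ℤ) - (m:ℤ))) from by ring,
    ← Int.sub_emod]
  congr 1
  ring

lemma InvOrd.comp {n m : ℕ} {g r : Fin n → Fin n} (hg : InvOrd n m g)
    (hr1 : ∀ t : Fin n, m ≤ (t:ℕ) → m ≤ ((r t : Fin n):ℕ))
    (hr2 : ∀ t t' : Fin n, m ≤ (t:ℕ) → m ≤ (t':ℕ) → Bb n m (r t) (r t') = Bb n m t t') :
    InvOrd n m (g ∘ r) := by
  intro t t' t'' ht ht' ht''
  rw [← hr2 t t' ht ht', ← hr2 t t'' ht ht'']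
  exact hg (r t) (r t') (r t'') (hr1 t ht) (hr1 t' ht') (hr1 t'' ht'')

lemma InvOrd.restrict {n m : ℕ} {g : Fin n → Fin n} (hg : InvOrd n m g) :
    InvOrd n (m+1) g := by
  intro t t' t'' ht ht' ht''
  rw [← hg t t' t'' (by omega) (by omega) (by omega)]
  have h1 := t.isLt
  have h2 := t'.isLt
  have h3 := t''.isLt
  rw [Bb_eval (by omega : m ≤ (t:ℕ)) (by omega : m ≤ (t':ℕ)),
    Bb_eval (by omega : m ≤ (t:ℕ)) (by omega : m ≤ (t'':ℕ)),
    Bb_eval ht ht', Bb_eval ht ht'']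
  split_ifs <;> omega

lemma invOrd_rho_step {n : ℕ} (a : Fin n → ℕ) {m : ℕ} (hm : m < n)
    (h : InvOrd n m (⇑(rho n a m)⁻¹)) : InvOrd n m (⇑(rho n a (m+1))⁻¹) := by
  have hrho : rho n a (m+1) = kappa n m (a ⟨n-1-m, by omega⟩) * rho n a m := by
    rw [rho, dif_pos hm]
  set s := a ⟨n-1-m, by omega⟩ with hs
  have hco : ⇑(rho n a (m+1))⁻¹ = (⇑(rho n a m)⁻¹) ∘ (⇑(kappa n m s)⁻¹) := by
    rw [hrho, mul_inv_rev]
    rfl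
  rw [hco]
  apply h.comp
  · intro t ht
    exact kappa_symm_ge s ht
  · intro t t' ht ht'
    have e1 : m ≤ (((kappa n m s)⁻¹ t : Fin n) : ℕ) := kappa_symm_ge s ht
    have e2 : m ≤ (((kappa n m s)⁻¹ t' : Fin n) : ℕ) := kappa_symm_ge s ht'
    have := Bb_kappa (s := s) e1 e2
    rw [show kappa n m s ((kappa n m s)⁻¹ t) = t from Equiv.apply_symm_apply _ t,
      show kappa n m s ((kappa n m s)⁻¹ t') = t' from Equiv.apply_symm_apply _ t'] at this
    exact this.symm

lemma invOrd_rho {n : ℕ} (a : Fin n → ℕ) : ∀ m, m ≤ n → InvOrd n m (⇑(rho n a m)⁻¹) := by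
  intro m
  induction m with
  | zero =>
    intro _
    show InvOrd n 0 _
    rw [rho]
    exact invOrd_one n
  | succ m ih =>
    intro hm
    exact (invOrd_rho_step a (by omega) (ih (by omega))).restrict

lemma rho_symm_tau_symm {n : ℕ} (a : Fin n → ℕ) (π : Equiv.Perm (Fin n))
    (hPhi : Phi n a = π) (m : ℕ) (x : Fin n) :
    (rho n a m)⁻¹ ((tau n a m).symm x) = π.symm x := by
  rw [← hPhi, ← tau_mul_rho n a m]
  rfl

lemma count_eq {n : ℕ} (hn : 2 ≤ n) (a : Fin n → ℕ) (π : Equiv.Perm (Fin n))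
    (hPhi : Phi n a = π) (haV : a ∈ Vn n)
    (i : ℕ) (hi : i + 2 ≤ n) :
    ((Finset.range (i + 1)).filter (fun k =>
        ((cinv n π (n - 1 - k) : ℤ) - (cinv n π (n - 1 - i) : ℤ)) % (n : ℤ) ≤
        ((cinv n π (n - 2 - i) : ℤ) - (cinv n π (n - 1 - i) : ℤ)) % (n : ℤ))).card
      = a ⟨i, by omega⟩ := by
  have hn0 : 0 < n := by omega
  set m := n - 1 - i with hmdef
  have hm1 : 1 ≤ m := by omega
  have hmn1 : m ≤ n - 1 := by omega
  have hmi : n - 1 - m = i := by omega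
  set s := a ⟨i, by omega⟩ with hsdef
  obtain ⟨hs1, hs2'⟩ := haV ⟨i, by omega⟩
  have hs2 : s ≤ n - m := by
    simp only [← hsdef] at hs2'
    omega
  have hrange : ∀ k : ℕ, n - 1 - k < n := fun k => by omega
  have hmn : m < n := by omega
  have hm1n : m - 1 < n := by omega
  have hns : n - s < n := by omega
  have hmns : m ≤ n - s := by omega
  set xm : Fin n := π.symm ⟨m, hmn⟩ with hxmdef
  set xm1 : Fin n := π.symm ⟨m - 1, hm1n⟩ with hxm1def
  -- rewrite the filter in terms of `Dd`
  have hstep1 : ((Finset.range (i + 1)).filter (fun k =>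
        ((cinv n π (n - 1 - k) : ℤ) - (cinv n π (n - 1 - i) : ℤ)) % (n : ℤ) ≤
        ((cinv n π (n - 2 - i) : ℤ) - (cinv n π (n - 1 - i) : ℤ)) % (n : ℤ))).card
      = ((Finset.range (i + 1)).filter (fun k =>
        Dd n xm (π.symm ⟨n - 1 - k, hrange k⟩) ≤ Dd n xm xm1)).card := by
    congr 1
    apply Finset.filter_congr
    intro k hk
    have e1 : n - 1 - i = m := rfl
    have e2 : n - 2 - i = m - 1 := by omega
    simp only [e1, e2, cinv, dif_pos (hrange k), dif_pos hmn, dif_pos hm1n, Dd]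
    exact Iff.rfl
  rw [hstep1]
  -- the target interval in `Fin n`
  have hTcard : ((Finset.univ : Finset (Fin n)).filter (fun t : Fin n =>
      m ≤ (t:ℕ) ∧ Dd n xm ((rho n a m)⁻¹ t) ≤ Dd n xm xm1)).card = s := by
    -- identify xm and xm1
    have hxm1 : xm1 = (rho n a m)⁻¹ ⟨m - 1, hm1n⟩ := by
      rw [hxm1def, ← rho_symm_tau_symm a π hPhi m,
        tau_symm_fix a (le_of_lt hmn) (show ((⟨m-1, hm1n⟩ : Fin n) : ℕ) < m by simp; omega)]
    have hrho1 : rho n a (m+1) = kappa n m s * rho n a m := by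
      rw [rho, dif_pos hmn]
      congr 2
      exact congrArg a (Fin.ext (by simp [hmi]))
    have hkinv : (kappa n m s).symm ⟨m, hmn⟩ = ⟨n - s, hns⟩ := by
      rw [Equiv.symm_apply_eq]
      apply Fin.ext
      rw [kappa_apply_ge s (show m ≤ ((⟨n-s, hns⟩ : Fin n) : ℕ) by simpa using hmns)]
      simp only []
      rw [show n - s - m + s = n - m by omega, Nat.mod_self]
      omega
    have hxm : xm = (rho n a m)⁻¹ ⟨n - s, hns⟩ := by
      rw [hxmdef, ← rho_symm_tau_symm a π hPhi (m+1),
        tau_symm_fix a (show m+1 ≤ n by omega) (show ((⟨m, hmn⟩ : Fin n) : ℕ) < m+1 by simp),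
        hrho1, mul_inv_rev]
      show (rho n a m)⁻¹ ((kappa n m s)⁻¹ ⟨m, hmn⟩) = _
      have hki : ((kappa n m s)⁻¹ : Equiv.Perm (Fin n)) ⟨m, hmn⟩ = ⟨n - s, hns⟩ := hkinv
      rw [hki]
    -- the cyclic-order invariant
    have hInv0 := invOrd_rho a (m-1) (by omega)
    have hInv1 := invOrd_rho_step a (show m - 1 < n by omega) hInv0
    rw [show m - 1 + 1 = m by omega] at hInv1
    -- the filter set is Ici ⟨n-s⟩
    have hT : ((Finset.univ : Finset (Fin n)).filter (fun t : Fin n =>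
        m ≤ (t:ℕ) ∧ Dd n xm ((rho n a m)⁻¹ t) ≤ Dd n xm xm1))
        = Finset.Ici (⟨n - s, hns⟩ : Fin n) := by
      ext t
      have htlt := t.isLt
      simp only [Finset.mem_filter, Finset.mem_univ, true_and, Finset.mem_Ici, Fin.le_def]
      rw [hxm, hxm1]
      have hiff : m ≤ (t:ℕ) →
          (Bb n (m-1) ⟨n - s, hns⟩ t ≤ Bb n (m-1) ⟨n - s, hns⟩ ⟨m - 1, hm1n⟩ ↔
           Dd n ((rho n a m)⁻¹ ⟨n - s, hns⟩) ((rho n a m)⁻¹ t)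
             ≤ Dd n ((rho n a m)⁻¹ ⟨n - s, hns⟩) ((rho n a m)⁻¹ ⟨m - 1, hm1n⟩)) :=
        fun htm => hInv1 ⟨n - s, hns⟩ t ⟨m - 1, hm1n⟩
          (by simp only [Fin.val_mk]; omega) (by omega) (by simp only [Fin.val_mk]; omega)
      constructor
      · rintro ⟨htm, hcond⟩
        have hb := (hiff htm).mpr hcond
        rw [Bb_eval (by simp only [Fin.val_mk]; omega) (by omega),
          Bb_eval (by simp only [Fin.val_mk]; omega) (by simp only [Fin.val_mk]; omega)] at hb
        simp only [Fin.val_mk] at hb ⊢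
        split_ifs at hb <;> omega
      · intro hts
        have htm : m ≤ (t : ℕ) := by omega
        refine ⟨htm, (hiff htm).mp ?_⟩
        rw [Bb_eval (by simp only [Fin.val_mk]; omega) (by omega),
          Bb_eval (by simp only [Fin.val_mk]; omega) (by simp only [Fin.val_mk]; omega)]
        simp only []
        split_ifs <;> omega
    rw [hT, Fin.card_Ici]
    simp only []
    omega
  rw [← hTcard]
  -- bijection between the two filters
  apply Finset.card_bij' (fun k _ => (tau n a m).symm ⟨n - 1 - k, hrange k⟩)
    (fun t _ => n - 1 - ((tau n a m t : Fin n) : ℕ))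
  · -- hi : maps into target
    intro k hk
    rw [Finset.mem_filter] at hk ⊢
    obtain ⟨hkr, hkc⟩ := hk
    rw [Finset.mem_range] at hkr
    refine ⟨Finset.mem_univ _, ?_, ?_⟩
    · exact tau_symm_ge a (le_of_lt hmn) (by simp only [Fin.val_mk]; omega)
    · rw [rho_symm_tau_symm a π hPhi m]
      exact hkc
  · -- hj : maps back
    intro t ht
    rw [Finset.mem_filter] at ht ⊢
    obtain ⟨-, htm, htc⟩ := ht
    have hv : m ≤ ((tau n a m t : Fin n) : ℕ) := tau_ge a (le_of_lt hmn) htm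
    have hv2 := (tau n a m t).isLt
    constructor
    · rw [Finset.mem_range]; omega
    · have he : (⟨n - 1 - (n - 1 - ((tau n a m t : Fin n) : ℕ)), hrange _⟩ : Fin n)
          = tau n a m t := Fin.ext (by simp only [Fin.val_mk]; omega)
      rw [he, ← rho_symm_tau_symm a π hPhi m] at *
      rw [Equiv.symm_apply_apply]
      exact htc
  · -- left inverse
    intro k hk
    rw [Finset.mem_filter, Finset.mem_range] at hk
    rw [Equiv.apply_symm_apply]
    simp only []
    omega
  · -- right inverse
    intro t ht
    rw [Finset.mem_filter] at ht
    obtain ⟨-, htm, -⟩ := ht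
    have hv : m ≤ ((tau n a m t : Fin n) : ℕ) := tau_ge a (le_of_lt hmn) htm
    have hv2 := (tau n a m t).isLt
    have he : (⟨n - 1 - (n - 1 - ((tau n a m t : Fin n) : ℕ)), hrange _⟩ : Fin n)
        = tau n a m t := Fin.ext (by simp only [Fin.val_mk]; omega)
    rw [he, Equiv.symm_apply_apply]

lemma last_eq {n : ℕ} (hn : 2 ≤ n) (a : Fin n → ℕ) (π : Equiv.Perm (Fin n))
    (hPhi : Phi n a = π) (haV : a ∈ Vn n) :
    a ⟨n - 1, by omega⟩ = n - cinv n π 0 := by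
  have h0 : (0:ℕ) < n := by omega
  have hlt : n - 1 < n := by omega
  obtain ⟨hs1, hs2⟩ := haV ⟨n - 1, hlt⟩
  have hs2' : a ⟨n - 1, hlt⟩ ≤ n := by simp only [Fin.val_mk] at hs2; omega
  have hns : n - a ⟨n - 1, hlt⟩ < n := by omega
  have hrho1 : rho n a 1 = kappa n 0 (a ⟨n - 1, hlt⟩) * rho n a 0 := by
    have h : rho n a (0+1) = (if h : 0 < n then kappa n 0 (a ⟨n - 1 - 0, by omega⟩) else 1)
        * rho n a 0 := by conv_lhs => rw [rho]
    rw [dif_pos h0] at h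
    simpa using h
  have hkinv : (kappa n 0 (a ⟨n - 1, hlt⟩)).symm ⟨0, h0⟩ = ⟨n - a ⟨n - 1, hlt⟩, hns⟩ := by
    rw [Equiv.symm_apply_eq]
    apply Fin.ext
    rw [kappa_apply_ge _ (Nat.zero_le _)]
    simp only [Fin.val_mk, Nat.sub_zero]
    rw [show n - a ⟨n - 1, hlt⟩ + a ⟨n - 1, hlt⟩ = n by omega, Nat.mod_self]
  have key : π.symm ⟨0, h0⟩ = ⟨n - a ⟨n - 1, hlt⟩, hns⟩ := by
    rw [← rho_symm_tau_symm a π hPhi 1,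
      tau_symm_fix a (by omega : 1 ≤ n) (show ((⟨0, h0⟩ : Fin n) : ℕ) < 1 by simp),
      hrho1, mul_inv_rev]
    show (rho n a 0)⁻¹ ((kappa n 0 (a ⟨n - 1, hlt⟩))⁻¹ ⟨0, h0⟩) = _
    have hki : ((kappa n 0 (a ⟨n - 1, hlt⟩))⁻¹ : Equiv.Perm (Fin n)) ⟨0, h0⟩
        = ⟨n - a ⟨n - 1, hlt⟩, hns⟩ := hkinv
    rw [hki]
    simp [rho]
  rw [cinv, dif_pos h0, key]
  simp only [Fin.val_mk]
  omega

theorem stmt_1 (n : ℕ) (hn : 2 ≤ n)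
    (R : Equiv.Perm (Fin n) → (Fin n → ℕ))
    (hR1 : ∀ π, R π ∈ Vn n) (hR2 : ∀ π, Phi n (R π) = π)
    (hR3 : ∀ a ∈ Vn n, R (Phi n a) = a)
    (π : Equiv.Perm (Fin n)) :
    (∀ i : ℕ, i + 2 ≤ n →
      Rcomp n (R π) i =
        ((Finset.range (i + 1)).filter (fun k =>
          ((cinv n π (n - 1 - k) : ℤ) - (cinv n π (n - 1 - i) : ℤ)) % (n : ℤ) ≤
          ((cinv n π (n - 2 - i) : ℤ) - (cinv n π (n - 1 - i) : ℤ)) % (n : ℤ))).card) ∧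
    Rcomp n (R π) (n - 1) = n - cinv n π 0 := by
  have hPhi := hR2 π
  have haV := hR1 π
  constructor
  · intro i hi
    have hiin : i < n := by omega
    rw [Rcomp, dif_pos hiin]
    exact (count_eq hn (R π) π hPhi haV i hi).symm
  · have h1 : n - 1 < n := by omega
    rw [Rcomp, dif_pos h1]
    exact last_eq hn (R π) π hPhi haV
end

section
/- For every i with 2 ≤ i ≤ n−1, the numbers a^{(0)}_i, a^{(1)}_i, …, a^{(i−1)}_i are all equal, where a^{(j)}_i denotes the i-th component of R(π^{(j)}). -/
lemma kappa_apply_of_lt {n i s : ℕ} {x : Fin n} (hx : (x : ℕ) < i) :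
    kappa n i s x = x := by
  show kappaFun n i s x = x
  unfold kappaFun
  rw [dif_pos hx]

lemma list_prod_apply_fix {n : ℕ} (l : List (Equiv.Perm (Fin n))) (x : Fin n)
    (h : ∀ σ ∈ l, σ x = x) : l.prod x = x := by
  induction l with
  | nil => simp
  | cons σ t ih =>
    rw [List.prod_cons, Equiv.Perm.mul_apply,
      ih (fun τ ht => h τ (List.mem_cons_of_mem _ ht)), h σ List.mem_cons_self]

lemma val_lt_of_mem_take {n k : ℕ} {x : Fin n} (h : x ∈ (List.finRange n).take k) :
    (x : ℕ) < k := by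
  rw [List.mem_iff_getElem] at h
  obtain ⟨idx, hidx, hx⟩ := h
  have hidx' : idx < min k n := by simpa using hidx
  have : x = (List.finRange n)[idx]'(by simp; omega) := by
    rw [← hx, List.getElem_take]
  have hv : (x : ℕ) = idx := by rw [this]; simp
  omega

lemma val_ge_of_mem_drop {n k : ℕ} {x : Fin n} (h : x ∈ (List.finRange n).drop k) :
    k ≤ (x : ℕ) := by
  rw [List.mem_iff_getElem] at h
  obtain ⟨idx, hidx, hx⟩ := h
  have hidx' : k + idx < n := by simp at hidx; omega
  have : x = (List.finRange n)[k + idx]'(by simpa using hidx') := by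
    rw [← hx, List.getElem_drop]
  have hv : (x : ℕ) = k + idx := by rw [this]; simp
  omega

lemma key_lemma (n k : ℕ) (hkn : k ≤ n)
    (R : Equiv.Perm (Fin n) → (Fin n → ℕ))
    (hR1 : ∀ π, R π ∈ Vn n) (hR2 : ∀ π, Phi n (R π) = π)
    (hR3 : ∀ a ∈ Vn n, R (Phi n a) = a)
    (ρ : Equiv.Perm (Fin n)) (x : Fin n) (hx : k ≤ (x : ℕ)) :
    R (kappa n (n - k) 1 * ρ) x = R ρ x := by
  set m := n - k with hm
  set a := R ρ with ha
  set ext : (∀ j : Fin k, Fin ((j : ℕ) + 1)) → (Fin n → ℕ) := fun c j =>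
    if h : (j : ℕ) < k then ((c ⟨j, h⟩ : ℕ) + 1) else a j with hext
  set F : (Fin n → ℕ) → Fin n → Equiv.Perm (Fin n) :=
    fun v j => kappa n (n - 1 - (j : ℕ)) (v j) with hF
  set P : (Fin n → ℕ) → Equiv.Perm (Fin n) := fun v =>
    (((List.finRange n).take k).map (F v)).prod with hP
  set Q : (Fin n → ℕ) → Equiv.Perm (Fin n) := fun v =>
    (((List.finRange n).drop k).map (F v)).prod with hQdef
  have hsplit : ∀ v, Phi n v = P v * Q v := by
    intro v
    rw [hP, hQdef, Phi, ← List.prod_append, ← List.map_append, List.take_append_drop]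
  have hQ : ∀ c, Q (ext c) = Q a := by
    intro c
    apply congrArg List.prod
    apply List.map_congr_left
    intro y hy
    have hky : k ≤ (y : ℕ) := val_ge_of_mem_drop hy
    simp only [hF, hext]
    rw [dif_neg (by omega)]
  have hPfix : ∀ v (z : Fin n), (z : ℕ) < m → P v z = z := by
    intro v z hz
    apply list_prod_apply_fix
    intro σ hσ
    rw [List.mem_map] at hσ
    obtain ⟨y, hy, rfl⟩ := hσ
    have hyk := val_lt_of_mem_take hy
    exact kappa_apply_of_lt (by omega)
  have hextVn : ∀ c, ext c ∈ Vn n := by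
    intro c j
    simp only [hext]
    by_cases h : (j : ℕ) < k
    · rw [dif_pos h]
      have h1 := (c ⟨j, h⟩).isLt
      have h2 : ((⟨(j : ℕ), h⟩ : Fin k) : ℕ) = (j : ℕ) := rfl
      omega
    · rw [dif_neg h]
      exact hR1 ρ j
  set G : (∀ j : Fin k, Fin ((j : ℕ) + 1)) →
      {σ : Equiv.Perm (Fin n) // ∀ z : Fin n, ¬ (m ≤ (z : ℕ)) → σ z = z} :=
    fun c => ⟨P (ext c), fun z hz => hPfix _ z (by omega)⟩ with hG
  have hGinj : Function.Injective G := by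
    intro c1 c2 hGeq
    have hPeq : P (ext c1) = P (ext c2) := congrArg Subtype.val hGeq
    have hPhi : Phi n (ext c1) = Phi n (ext c2) := by
      rw [hsplit, hsplit, hPeq, hQ, hQ]
    have heq : ext c1 = ext c2 :=
      (hR3 _ (hextVn c1)).symm.trans (by rw [hPhi]; exact hR3 _ (hextVn c2))
    funext j
    have hj : (j : ℕ) < n := lt_of_lt_of_le j.isLt hkn
    have h2 := congrFun heq ⟨(j : ℕ), hj⟩
    simp only [hext] at h2
    rw [dif_pos (show ((⟨(j : ℕ), hj⟩ : Fin n) : ℕ) < k from j.isLt),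
        dif_pos (show ((⟨(j : ℕ), hj⟩ : Fin n) : ℕ) < k from j.isLt)] at h2
    simp only [Fin.eta] at h2
    exact Fin.ext (by omega)
  have hcard : Fintype.card (∀ j : Fin k, Fin ((j : ℕ) + 1)) =
      Fintype.card {σ : Equiv.Perm (Fin n) // ∀ z : Fin n, ¬ (m ≤ (z : ℕ)) → σ z = z} := by
    have e1 := Equiv.Perm.subtypeEquivSubtypePerm (fun z : Fin n => m ≤ (z : ℕ))
    have e2 : {z : Fin n // m ≤ (z : ℕ)} ≃ Fin k :=
      { toFun := fun z => ⟨(z.1 : ℕ) - m, by have := z.1.isLt; have := z.2; omega⟩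
        invFun := fun y => ⟨⟨m + (y : ℕ), by have := y.isLt; omega⟩, by simp⟩
        left_inv := fun z => by
          apply Subtype.ext; apply Fin.ext; have := z.2; simp; omega
        right_inv := fun y => by apply Fin.ext; simp }
    rw [← Fintype.card_congr e1, Fintype.card_perm, Fintype.card_congr e2, Fintype.card_fin]
    rw [Fintype.card_pi]
    simp only [Fintype.card_fin]
    rw [Fin.prod_univ_eq_prod_range (fun j => j + 1) k]
    exact Finset.prod_range_add_one_eq_factorial k
  have hGsurj : Function.Surjective G :=
    ((Fintype.bijective_iff_injective_and_card G).mpr ⟨hGinj, hcard⟩).2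
  obtain ⟨c, hc⟩ := hGsurj ⟨kappa n m 1 * P a, fun z hz => by
    rw [Equiv.Perm.mul_apply, hPfix a z (by omega), kappa_apply_of_lt (by omega)]⟩
  have hPc : P (ext c) = kappa n m 1 * P a := congrArg Subtype.val hc
  have hPhi2 : Phi n (ext c) = kappa n m 1 * ρ := by
    rw [hsplit, hPc, hQ, mul_assoc, ← hsplit, hR2]
  have hRres : R (kappa n m 1 * ρ) = ext c := by
    rw [← hPhi2]
    exact hR3 _ (hextVn c)
  rw [hRres]
  simp only [hext]
  rw [dif_neg (by omega)]

theorem stmt_9 (n : ℕ) (hn : 2 ≤ n)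
    (R : Equiv.Perm (Fin n) → (Fin n → ℕ))
    (hR1 : ∀ π, R π ∈ Vn n) (hR2 : ∀ π, Phi n (R π) = π)
    (hR3 : ∀ a ∈ Vn n, R (Phi n a) = a)
    (ρ : Equiv.Perm (Fin n)) :
    ∀ i : ℕ, 2 ≤ i → i + 1 ≤ n → ∀ j₁ j₂ : ℕ, j₁ < i → j₂ < i →
      Rcomp n (R (kappa n (n - j₁ - 1) 1 * ρ)) i =
        Rcomp n (R (kappa n (n - j₂ - 1) 1 * ρ)) i := by
  intro i hi2 hin j₁ j₂ hj₁ hj₂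
  have key : ∀ j : ℕ, j < i →
      Rcomp n (R (kappa n (n - j - 1) 1 * ρ)) i = Rcomp n (R ρ) i := by
    intro j hj
    have h1 : n - j - 1 = n - (j + 1) := by omega
    have hin' : i < n := by omega
    unfold Rcomp
    rw [dif_pos hin', dif_pos hin', h1]
    exact key_lemma n (j + 1) (by omega) R hR1 hR2 hR3 ρ ⟨i, hin'⟩ hj
  rw [key j₁ hj₁, key j₂ hj₂]
end

section
/- Let C ⊆ S_n be a single-deletion-correcting permutation code, i.e., for all π, σ ∈ C and all i, j ∈ {0,…,n−1}, if π(κ_{i,1}(k)) = σ(κ_{j,1}(k)) for all k ∈ {0,…,n−2}, then π = σ. Then |C| ≤ (n−1)!. -/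
theorem stmt_19 (n : ℕ) (hn : 2 ≤ n) (C : Set (Equiv.Perm (Fin n)))
    (hC : ∀ π ∈ C, ∀ σ ∈ C, ∀ i j : Fin n,
      (∀ k : Fin n, (k : ℕ) + 2 ≤ n →
        π (kappa n (i : ℕ) 1 k) = σ (kappa n (j : ℕ) 1 k)) → π = σ) :
    C.ncard ≤ Nat.factorial (n - 1) := by
  classical
  have hn1 : n - 1 < n := by omega
  set L : Fin n := ⟨n - 1, hn1⟩ with hLdef
  have hkapp : ∀ i s : ℕ, ∀ x : Fin n, kappa n i s x = kappaFun n i s x := fun _ _ _ => rfl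
  have hkL : ∀ i : Fin n, kappa n (i : ℕ) 1 L = i := by
    intro i
    have hi : (i : ℕ) < n := i.isLt
    apply Fin.ext
    rw [hkapp]
    unfold kappaFun
    rw [dif_neg (by simp only [hLdef]; omega)]
    simp only [hLdef]
    have h1 : (n - 1 - (i : ℕ) + 1) = n - (i : ℕ) := by omega
    rw [h1, Nat.mod_self]
    omega
  have hgL : ∀ π : Equiv.Perm (Fin n),
      (π * kappa n ((π⁻¹ L : Fin n) : ℕ) 1) L = L := by
    intro π
    rw [Equiv.Perm.mul_apply, hkL, ← Equiv.Perm.mul_apply, mul_inv_cancel, Equiv.Perm.one_apply]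
  have hprop : ∀ π : Equiv.Perm (Fin n), ∀ x : Fin n,
      x ≠ L ↔ (π * kappa n ((π⁻¹ L : Fin n) : ℕ) 1) x ≠ L := by
    intro π x
    constructor
    · intro hx h
      apply hx
      have := (π * kappa n ((π⁻¹ L : Fin n) : ℕ) 1).injective (h.trans (hgL π).symm)
      exact this
    · intro h hx
      exact h (hx ▸ hgL π)
  set F : Equiv.Perm (Fin n) → Equiv.Perm {x : Fin n // x ≠ L} :=
    fun π => (π * kappa n ((π⁻¹ L : Fin n) : ℕ) 1).subtypePerm (fun x => (hprop π x).symm) with hF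
  have hinj : Set.InjOn F C := by
    intro π hπ σ hσ hEq
    have hfun : ∀ x : Fin n, (π * kappa n ((π⁻¹ L : Fin n) : ℕ) 1) x
        = (σ * kappa n ((σ⁻¹ L : Fin n) : ℕ) 1) x := by
      intro x
      by_cases hx : x = L
      · rw [hx, hgL, hgL]
      · have := congrArg (fun e : Equiv.Perm {x : Fin n // x ≠ L} =>
          ((e ⟨x, hx⟩ : {x : Fin n // x ≠ L}) : Fin n)) hEq
        simpa [hF, Equiv.Perm.subtypePerm_apply] using this
    exact hC π hπ σ hσ (π⁻¹ L) (σ⁻¹ L) (fun k _ => by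
      have := hfun k
      simpa [Equiv.Perm.mul_apply] using this)
  calc C.ncard = (F '' C).ncard := (Set.ncard_image_of_injOn hinj).symm
    _ ≤ (Set.univ : Set (Equiv.Perm {x : Fin n // x ≠ L})).ncard :=
        Set.ncard_le_ncard (Set.subset_univ _) Set.finite_univ
    _ = Fintype.card (Equiv.Perm {x : Fin n // x ≠ L}) := by
        rw [Set.ncard_univ, Nat.card_eq_fintype_card]
    _ = (Fintype.card {x : Fin n // x ≠ L}).factorial := Fintype.card_perm
    _ = Nat.factorial (n - 1) := by
        have : Fintype.card {x : Fin n // x ≠ L} = n - 1 := by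
          rw [Fintype.card_subtype_compl, Fintype.card_subtype_eq, Fintype.card_fin]
        rw [this]
end
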